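/- For every natural number n, there exists a positive word w in the generators σ1, σ2, σ3 of the braid group on 4 strands such that w represents (σ1σ2σ3)^{2n+1}, w contains exactly 5n+2 letters from {σ1, σ3} and exactly n+1 letters equal to σ2. -/

import Mathlib

/-- The braid relations on `n` generators. -/
def braidRels (n : ℕ) : Set (FreeGroup (Fin n)) :=
  { r | (∃ i j : Fin n, (i : ℕ) + 2 ≤ (j : ℕ) ∧
          r = FreeGroup.of i * FreeGroup.of j * (FreeGroup.of i)⁻¹ * (FreeGroup.of j)⁻¹) ∨
        (∃ i j : Fin n, (j : ℕ) = (i : ℕ) + 1 ∧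
          r = FreeGroup.of i * FreeGroup.of j * FreeGroup.of i *
              (FreeGroup.of j)⁻¹ * (FreeGroup.of i)⁻¹ * (FreeGroup.of j)⁻¹) }

/-- The braid group on 4 strands, presented by generators `σ₁, σ₂, σ₃` and the Artin relations. -/
abbrev B4 := PresentedGroup (braidRels 3)

/-- The Artin generator `σ_{i+1}` of the braid group on 4 strands. -/
def σ (i : Fin 3) : B4 := PresentedGroup.of i

namespace BraidAux

lemma rel_one {r : FreeGroup (Fin 3)} (h : r ∈ braidRels 3) :
    (QuotientGroup.mk r : B4) = 1 := by
  rw [QuotientGroup.eq_one_iff]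
  exact Subgroup.subset_normalClosure h

lemma mk_of (i : Fin 3) : (QuotientGroup.mk (FreeGroup.of i) : B4) = σ i := rfl

lemma rel02 : σ 0 * σ 2 = σ 2 * σ 0 := by
  have h : (QuotientGroup.mk (FreeGroup.of (0 : Fin 3) * FreeGroup.of (2 : Fin 3) *
      (FreeGroup.of (0 : Fin 3))⁻¹ * (FreeGroup.of (2 : Fin 3))⁻¹) : B4) = 1 :=
    rel_one (Or.inl ⟨0, 2, by norm_num, rfl⟩)
  simp only [QuotientGroup.mk_mul, QuotientGroup.mk_inv, mk_of] at h
  have := mul_eq_one_iff_eq_inv.mp h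
  calc σ 0 * σ 2 = (σ 0 * σ 2 * (σ 0)⁻¹ * (σ 2)⁻¹) * (σ 2 * σ 0) := by group
    _ = σ 2 * σ 0 := by rw [show σ 0 * σ 2 * (σ 0)⁻¹ * (σ 2)⁻¹ = 1 from h, one_mul]

lemma rel010 : σ 0 * σ 1 * σ 0 = σ 1 * σ 0 * σ 1 := by
  have h : (QuotientGroup.mk (FreeGroup.of (0 : Fin 3) * FreeGroup.of (1 : Fin 3) *
      FreeGroup.of (0 : Fin 3) * (FreeGroup.of (1 : Fin 3))⁻¹ * (FreeGroup.of (0 : Fin 3))⁻¹ *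
      (FreeGroup.of (1 : Fin 3))⁻¹) : B4) = 1 :=
    rel_one (Or.inr ⟨0, 1, by norm_num, rfl⟩)
  simp only [QuotientGroup.mk_mul, QuotientGroup.mk_inv, mk_of] at h
  calc σ 0 * σ 1 * σ 0
      = (σ 0 * σ 1 * σ 0 * (σ 1)⁻¹ * (σ 0)⁻¹ * (σ 1)⁻¹) * (σ 1 * σ 0 * σ 1) := by group
    _ = σ 1 * σ 0 * σ 1 := by rw [show σ 0 * σ 1 * σ 0 * (σ 1)⁻¹ * (σ 0)⁻¹ * (σ 1)⁻¹ = 1 from h, one_mul]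

lemma rel121 : σ 1 * σ 2 * σ 1 = σ 2 * σ 1 * σ 2 := by
  have h : (QuotientGroup.mk (FreeGroup.of (1 : Fin 3) * FreeGroup.of (2 : Fin 3) *
      FreeGroup.of (1 : Fin 3) * (FreeGroup.of (2 : Fin 3))⁻¹ * (FreeGroup.of (1 : Fin 3))⁻¹ *
      (FreeGroup.of (2 : Fin 3))⁻¹) : B4) = 1 :=
    rel_one (Or.inr ⟨1, 2, by norm_num, rfl⟩)
  simp only [QuotientGroup.mk_mul, QuotientGroup.mk_inv, mk_of] at h
  calc σ 1 * σ 2 * σ 1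
      = (σ 1 * σ 2 * σ 1 * (σ 2)⁻¹ * (σ 1)⁻¹ * (σ 2)⁻¹) * (σ 2 * σ 1 * σ 2) := by group
    _ = σ 2 * σ 1 * σ 2 := by rw [show σ 1 * σ 2 * σ 1 * (σ 2)⁻¹ * (σ 1)⁻¹ * (σ 2)⁻¹ = 1 from h, one_mul]

lemma swap02' (x : B4) : σ 0 * (σ 2 * x) = σ 2 * (σ 0 * x) := by
  rw [← mul_assoc, rel02, mul_assoc]

lemma b01' (x : B4) : σ 0 * (σ 1 * (σ 0 * x)) = σ 1 * (σ 0 * (σ 1 * x)) := by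
  rw [← mul_assoc, ← mul_assoc, rel010, mul_assoc, mul_assoc]

lemma b12' (x : B4) : σ 1 * (σ 2 * (σ 1 * x)) = σ 2 * (σ 1 * (σ 2 * x)) := by
  rw [← mul_assoc, ← mul_assoc, rel121, mul_assoc, mul_assoc]

lemma step_swap (p q : List (Fin 3)) :
    ((p ++ 0 :: 2 :: q).map σ).prod = ((p ++ 2 :: 0 :: q).map σ).prod := by
  simp only [List.map_append, List.prod_append, List.map_cons, List.prod_cons, swap02']

lemma step_b01 (p q : List (Fin 3)) :
    ((p ++ 0 :: 1 :: 0 :: q).map σ).prod = ((p ++ 1 :: 0 :: 1 :: q).map σ).prod := by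
  simp only [List.map_append, List.prod_append, List.map_cons, List.prod_cons, b01']

lemma step_b12 (p q : List (Fin 3)) :
    ((p ++ 1 :: 2 :: 1 :: q).map σ).prod = ((p ++ 2 :: 1 :: 2 :: q).map σ).prod := by
  simp only [List.map_append, List.prod_append, List.map_cons, List.prod_cons, b12']

lemma chain_A1 : (([0,0,1,2,0,0,0,1,0,0,2,1,0,2,2] : List (Fin 3)).map σ).prod = (([0,1,2,0,1,2,0,1,2,0,1,2,0,1,2] : List (Fin 3)).map σ).prod := by
  calc (([0,0,1,2,0,0,0,1,0,0,2,1,0,2,2] : List (Fin 3)).map σ).prod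
      _ = (([0,0,1,0,2,0,0,1,0,0,2,1,0,2,2] : List (Fin 3)).map σ).prod := (step_swap [0,0,1] [0,0,1,0,0,2,1,0,2,2]).symm
      _ = (([0,0,1,0,2,0,0,1,0,2,0,1,0,2,2] : List (Fin 3)).map σ).prod := step_swap [0,0,1,0,2,0,0,1,0] [1,0,2,2]
      _ = (([0,1,0,1,2,0,0,1,0,2,0,1,0,2,2] : List (Fin 3)).map σ).prod := step_b01 [0] [2,0,0,1,0,2,0,1,0,2,2]
      _ = (([0,1,0,1,2,0,1,0,1,2,0,1,0,2,2] : List (Fin 3)).map σ).prod := step_b01 [0,1,0,1,2,0] [2,0,1,0,2,2]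
      _ = (([0,1,0,1,2,1,0,1,1,2,0,1,0,2,2] : List (Fin 3)).map σ).prod := step_b01 [0,1,0,1,2] [1,2,0,1,0,2,2]
      _ = (([0,1,0,2,1,2,0,1,1,2,0,1,0,2,2] : List (Fin 3)).map σ).prod := step_b12 [0,1,0] [0,1,1,2,0,1,0,2,2]
      _ = (([0,1,2,0,1,2,0,1,1,2,0,1,0,2,2] : List (Fin 3)).map σ).prod := step_swap [0,1] [1,2,0,1,1,2,0,1,0,2,2]
      _ = (([0,1,2,0,1,2,0,1,1,2,1,0,1,2,2] : List (Fin 3)).map σ).prod := step_b01 [0,1,2,0,1,2,0,1,1,2] [2,2]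
      _ = (([0,1,2,0,1,2,0,1,2,1,2,0,1,2,2] : List (Fin 3)).map σ).prod := step_b12 [0,1,2,0,1,2,0,1] [0,1,2,2]
      _ = (([0,1,2,0,1,2,0,1,2,1,0,2,1,2,2] : List (Fin 3)).map σ).prod := (step_swap [0,1,2,0,1,2,0,1,2,1] [1,2,2]).symm
      _ = (([0,1,2,0,1,2,0,1,2,1,0,1,2,1,2] : List (Fin 3)).map σ).prod := (step_b12 [0,1,2,0,1,2,0,1,2,1,0] [2]).symm
      _ = (([0,1,2,0,1,2,0,1,2,0,1,0,2,1,2] : List (Fin 3)).map σ).prod := (step_b01 [0,1,2,0,1,2,0,1,2] [2,1,2]).symm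
      _ = (([0,1,2,0,1,2,0,1,2,0,1,2,0,1,2] : List (Fin 3)).map σ).prod := step_swap [0,1,2,0,1,2,0,1,2,0,1] [1,2]

lemma chain_A3 : (([0,0,1,2,0,1,2,0,1,2,0,0,2,1,0,0,2,1,0,0,2] : List (Fin 3)).map σ).prod = (([0,1,2,0,1,2,0,1,2,0,1,2,0,1,2,0,1,2,0,1,2] : List (Fin 3)).map σ).prod := by
  calc (([0,0,1,2,0,1,2,0,1,2,0,0,2,1,0,0,2,1,0,0,2] : List (Fin 3)).map σ).prod
      _ = (([0,0,1,0,2,1,2,0,1,2,0,0,2,1,0,0,2,1,0,0,2] : List (Fin 3)).map σ).prod := (step_swap [0,0,1] [1,2,0,1,2,0,0,2,1,0,0,2,1,0,0,2]).symm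
      _ = (([0,0,1,0,2,1,0,2,1,2,0,0,2,1,0,0,2,1,0,0,2] : List (Fin 3)).map σ).prod := (step_swap [0,0,1,0,2,1] [1,2,0,0,2,1,0,0,2,1,0,0,2]).symm
      _ = (([0,0,1,0,2,1,0,2,1,2,0,2,0,1,0,0,2,1,0,0,2] : List (Fin 3)).map σ).prod := step_swap [0,0,1,0,2,1,0,2,1,2,0] [1,0,0,2,1,0,0,2]
      _ = (([0,0,1,0,2,1,0,2,1,2,0,2,0,1,0,2,0,1,0,0,2] : List (Fin 3)).map σ).prod := step_swap [0,0,1,0,2,1,0,2,1,2,0,2,0,1,0] [1,0,0,2]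
      _ = (([0,1,0,1,2,1,0,2,1,2,0,2,0,1,0,2,0,1,0,0,2] : List (Fin 3)).map σ).prod := step_b01 [0] [2,1,0,2,1,2,0,2,0,1,0,2,0,1,0,0,2]
      _ = (([0,1,0,2,1,2,0,2,1,2,0,2,0,1,0,2,0,1,0,0,2] : List (Fin 3)).map σ).prod := step_b12 [0,1,0] [0,2,1,2,0,2,0,1,0,2,0,1,0,0,2]
      _ = (([0,1,2,0,1,2,0,2,1,2,0,2,0,1,0,2,0,1,0,0,2] : List (Fin 3)).map σ).prod := step_swap [0,1] [1,2,0,2,1,2,0,2,0,1,0,2,0,1,0,0,2]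
      _ = (([0,1,2,0,1,2,0,1,2,1,0,2,0,1,0,2,0,1,0,0,2] : List (Fin 3)).map σ).prod := (step_b12 [0,1,2,0,1,2,0] [0,2,0,1,0,2,0,1,0,0,2]).symm
      _ = (([0,1,2,0,1,2,0,1,2,1,0,2,1,0,1,2,0,1,0,0,2] : List (Fin 3)).map σ).prod := step_b01 [0,1,2,0,1,2,0,1,2,1,0,2] [2,0,1,0,0,2]
      _ = (([0,1,2,0,1,2,0,1,2,1,0,2,1,0,1,2,1,0,1,0,2] : List (Fin 3)).map σ).prod := step_b01 [0,1,2,0,1,2,0,1,2,1,0,2,1,0,1,2] [0,2]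
      _ = (([0,1,2,0,1,2,0,1,2,1,0,2,1,0,2,1,2,0,1,0,2] : List (Fin 3)).map σ).prod := step_b12 [0,1,2,0,1,2,0,1,2,1,0,2,1,0] [0,1,0,2]
      _ = (([0,1,2,0,1,2,0,1,2,1,0,2,1,2,0,1,2,0,1,0,2] : List (Fin 3)).map σ).prod := step_swap [0,1,2,0,1,2,0,1,2,1,0,2,1] [1,2,0,1,0,2]
      _ = (([0,1,2,0,1,2,0,1,2,1,0,1,2,1,0,1,2,0,1,0,2] : List (Fin 3)).map σ).prod := (step_b12 [0,1,2,0,1,2,0,1,2,1,0] [0,1,2,0,1,0,2]).symm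
      _ = (([0,1,2,0,1,2,0,1,2,0,1,0,2,1,0,1,2,0,1,0,2] : List (Fin 3)).map σ).prod := (step_b01 [0,1,2,0,1,2,0,1,2] [2,1,0,1,2,0,1,0,2]).symm
      _ = (([0,1,2,0,1,2,0,1,2,0,1,2,0,1,0,1,2,0,1,0,2] : List (Fin 3)).map σ).prod := step_swap [0,1,2,0,1,2,0,1,2,0,1] [1,0,1,2,0,1,0,2]
      _ = (([0,1,2,0,1,2,0,1,2,0,1,2,0,1,0,1,2,1,0,1,2] : List (Fin 3)).map σ).prod := step_b01 [0,1,2,0,1,2,0,1,2,0,1,2,0,1,0,1,2] [2]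
      _ = (([0,1,2,0,1,2,0,1,2,0,1,2,0,1,0,2,1,2,0,1,2] : List (Fin 3)).map σ).prod := step_b12 [0,1,2,0,1,2,0,1,2,0,1,2,0,1,0] [0,1,2]
      _ = (([0,1,2,0,1,2,0,1,2,0,1,2,0,1,2,0,1,2,0,1,2] : List (Fin 3)).map σ).prod := step_swap [0,1,2,0,1,2,0,1,2,0,1,2,0,1] [1,2,0,1,2]

lemma chain_w1 : (([0,0,1,0,0,2,1,0,2] : List (Fin 3)).map σ).prod = (([0,1,2,0,1,2,0,1,2] : List (Fin 3)).map σ).prod := by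
  calc (([0,0,1,0,0,2,1,0,2] : List (Fin 3)).map σ).prod
      _ = (([0,0,1,0,2,0,1,0,2] : List (Fin 3)).map σ).prod := step_swap [0,0,1,0] [1,0,2]
      _ = (([0,1,0,1,2,0,1,0,2] : List (Fin 3)).map σ).prod := step_b01 [0] [2,0,1,0,2]
      _ = (([0,1,0,1,2,1,0,1,2] : List (Fin 3)).map σ).prod := step_b01 [0,1,0,1,2] [2]
      _ = (([0,1,0,2,1,2,0,1,2] : List (Fin 3)).map σ).prod := step_b12 [0,1,0] [0,1,2]
      _ = (([0,1,2,0,1,2,0,1,2] : List (Fin 3)).map σ).prod := step_swap [0,1] [1,2,0,1,2]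

lemma chain_cen1 : (([0,1,2,0,1,2,0,1,2,0,1,2,0] : List (Fin 3)).map σ).prod = (([0,0,1,2,0,1,2,0,1,2,0,1,2] : List (Fin 3)).map σ).prod := by
  calc (([0,1,2,0,1,2,0,1,2,0,1,2,0] : List (Fin 3)).map σ).prod
      _ = (([0,1,0,2,1,2,0,1,2,0,1,2,0] : List (Fin 3)).map σ).prod := (step_swap [0,1] [1,2,0,1,2,0,1,2,0]).symm
      _ = (([0,1,0,2,1,2,0,1,2,0,1,0,2] : List (Fin 3)).map σ).prod := (step_swap [0,1,0,2,1,2,0,1,2,0,1] []).symm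
      _ = (([0,1,0,1,2,1,0,1,2,0,1,0,2] : List (Fin 3)).map σ).prod := (step_b12 [0,1,0] [0,1,2,0,1,0,2]).symm
      _ = (([0,0,1,0,2,1,0,1,2,0,1,0,2] : List (Fin 3)).map σ).prod := (step_b01 [0] [2,1,0,1,2,0,1,0,2]).symm
      _ = (([0,0,1,2,0,1,0,1,2,0,1,0,2] : List (Fin 3)).map σ).prod := step_swap [0,0,1] [1,0,1,2,0,1,0,2]
      _ = (([0,0,1,2,0,1,0,1,2,1,0,1,2] : List (Fin 3)).map σ).prod := step_b01 [0,0,1,2,0,1,0,1,2] [2]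
      _ = (([0,0,1,2,0,1,0,2,1,2,0,1,2] : List (Fin 3)).map σ).prod := step_b12 [0,0,1,2,0,1,0] [0,1,2]
      _ = (([0,0,1,2,0,1,2,0,1,2,0,1,2] : List (Fin 3)).map σ).prod := step_swap [0,0,1,2,0,1] [1,2,0,1,2]

lemma chain_cen2 : (([0,1,2,0,1,2,0,1,2,0,1,2,1] : List (Fin 3)).map σ).prod = (([1,0,1,2,0,1,2,0,1,2,0,1,2] : List (Fin 3)).map σ).prod := by
  calc (([0,1,2,0,1,2,0,1,2,0,1,2,1] : List (Fin 3)).map σ).prod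
      _ = (([0,1,0,2,1,2,0,1,2,0,1,2,1] : List (Fin 3)).map σ).prod := (step_swap [0,1] [1,2,0,1,2,0,1,2,1]).symm
      _ = (([0,1,0,2,1,0,2,1,2,0,1,2,1] : List (Fin 3)).map σ).prod := (step_swap [0,1,0,2,1] [1,2,0,1,2,1]).symm
      _ = (([1,0,1,2,1,0,2,1,2,0,1,2,1] : List (Fin 3)).map σ).prod := step_b01 [] [2,1,0,2,1,2,0,1,2,1]
      _ = (([1,0,1,2,1,0,1,2,1,0,1,2,1] : List (Fin 3)).map σ).prod := (step_b12 [1,0,1,2,1,0] [0,1,2,1]).symm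
      _ = (([1,0,1,2,0,1,0,2,1,0,1,2,1] : List (Fin 3)).map σ).prod := (step_b01 [1,0,1,2] [2,1,0,1,2,1]).symm
      _ = (([1,0,1,2,0,1,2,0,1,0,1,2,1] : List (Fin 3)).map σ).prod := step_swap [1,0,1,2,0,1] [1,0,1,2,1]
      _ = (([1,0,1,2,0,1,2,0,1,0,2,1,2] : List (Fin 3)).map σ).prod := step_b12 [1,0,1,2,0,1,2,0,1,0] []
      _ = (([1,0,1,2,0,1,2,0,1,2,0,1,2] : List (Fin 3)).map σ).prod := step_swap [1,0,1,2,0,1,2,0,1] [1,2]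

lemma chain_cen3 : (([0,1,2,0,1,2,0,1,2,0,1,2,2] : List (Fin 3)).map σ).prod = (([2,0,1,2,0,1,2,0,1,2,0,1,2] : List (Fin 3)).map σ).prod := by
  calc (([0,1,2,0,1,2,0,1,2,0,1,2,2] : List (Fin 3)).map σ).prod
      _ = (([0,1,2,0,1,0,2,1,2,0,1,2,2] : List (Fin 3)).map σ).prod := (step_swap [0,1,2,0,1] [1,2,0,1,2,2]).symm
      _ = (([0,1,2,0,1,0,2,1,0,2,1,2,2] : List (Fin 3)).map σ).prod := (step_swap [0,1,2,0,1,0,2,1] [1,2,2]).symm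
      _ = (([0,1,2,1,0,1,2,1,0,2,1,2,2] : List (Fin 3)).map σ).prod := step_b01 [0,1,2] [2,1,0,2,1,2,2]
      _ = (([0,2,1,2,0,1,2,1,0,2,1,2,2] : List (Fin 3)).map σ).prod := step_b12 [0] [0,1,2,1,0,2,1,2,2]
      _ = (([2,0,1,2,0,1,2,1,0,2,1,2,2] : List (Fin 3)).map σ).prod := step_swap [] [1,2,0,1,2,1,0,2,1,2,2]
      _ = (([2,0,1,2,0,1,2,1,0,1,2,1,2] : List (Fin 3)).map σ).prod := (step_b12 [2,0,1,2,0,1,2,1,0] [2]).symm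
      _ = (([2,0,1,2,0,1,2,0,1,0,2,1,2] : List (Fin 3)).map σ).prod := (step_b01 [2,0,1,2,0,1,2] [2,1,2]).symm
      _ = (([2,0,1,2,0,1,2,0,1,2,0,1,2] : List (Fin 3)).map σ).prod := step_swap [2,0,1,2,0,1,2,0,1] [1,2]


def D : B4 := σ 0 * σ 1 * σ 2

def N1 : List (Fin 3) := [0,0,0,1,0,0,2,1,0,2,2]
def N3 : List (Fin 3) := [0,0,2,1,0,0,2,1,0,0,2]

def wseq : ℕ → List (Fin 3)
  | 0 => [0,1,2]
  | 1 => [0,0,1,0,0,2,1,0,2]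
  | n+2 => 0 :: (wseq n ++ (if n % 2 = 0 then N1 else N3))

-- conversions of the chain lemmas into group identities

lemma A1 : σ 0 * (D * ((N1.map σ).prod)) = D ^ 5 := by
  have h := chain_A1
  simp only [List.map_cons, List.map_nil, List.prod_cons, List.prod_nil, mul_one] at h
  simp only [D, N1, List.map_cons, List.map_nil, List.prod_cons, List.prod_nil, mul_one,
    pow_succ, pow_zero, one_mul, mul_assoc]
  simpa only [mul_assoc] using h

lemma A3 : σ 0 * (D ^ 3 * ((N3.map σ).prod)) = D ^ 7 := by
  have h := chain_A3
  simp only [List.map_cons, List.map_nil, List.prod_cons, List.prod_nil, mul_one] at h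
  simp only [D, N3, List.map_cons, List.map_nil, List.prod_cons, List.prod_nil, mul_one,
    pow_succ, pow_zero, one_mul, mul_assoc]
  simpa only [mul_assoc] using h

lemma w1_prod : (((wseq 1).map σ).prod) = D ^ 3 := by
  have h := chain_w1
  simp only [List.map_cons, List.map_nil, List.prod_cons, List.prod_nil, mul_one] at h
  simp only [wseq, D, List.map_cons, List.map_nil, List.prod_cons, List.prod_nil, mul_one,
    pow_succ, pow_zero, one_mul, mul_assoc]
  simpa only [mul_assoc] using h

lemma cen (i : Fin 3) : D ^ 4 * σ i = σ i * D ^ 4 := by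
  fin_cases i
  · have h := chain_cen1
    simp only [List.map_cons, List.map_nil, List.prod_cons, List.prod_nil, mul_one] at h
    simp only [D, pow_succ, pow_zero, one_mul, mul_assoc]
    exact h
  · have h := chain_cen2
    simp only [List.map_cons, List.map_nil, List.prod_cons, List.prod_nil, mul_one] at h
    simp only [D, pow_succ, pow_zero, one_mul, mul_assoc]
    exact h
  · have h := chain_cen3
    simp only [List.map_cons, List.map_nil, List.prod_cons, List.prod_nil, mul_one] at h
    simp only [D, pow_succ, pow_zero, one_mul, mul_assoc]
    exact h

lemma comm_σD4 (i : Fin 3) : Commute (σ i) (D ^ 4) := (cen i).symm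

theorem prod_wseq : ∀ n : ℕ, (((wseq n).map σ).prod) = D ^ (2 * n + 1) := by
  intro n
  induction n using Nat.strong_induction_on with
  | _ n ih =>
    match n with
    | 0 =>
      show ((([0,1,2] : List (Fin 3)).map σ).prod) = D ^ (2 * 0 + 1)
      norm_num
      simp only [D, List.map_cons, List.map_nil, List.prod_cons, List.prod_nil, mul_one,
        mul_assoc]
    | 1 =>
      rw [w1_prod]
    | (n+2) =>
      have ihn := ih n (by omega)
      have e : wseq (n+2) = 0 :: (wseq n ++ (if n % 2 = 0 then N1 else N3)) := rfl
      rcases Nat.even_or_odd n with ⟨k, hk⟩ | ⟨k, hk⟩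
      · subst hk
        have hmod : (k + k) % 2 = 0 := by omega
        rw [e, if_pos hmod]
        rw [List.map_cons, List.prod_cons, List.map_append, List.prod_append, ihn]
        have eexp : 2 * (k + k) + 1 = 4 * k + 1 := by omega
        have hD : D ^ (2 * (k + k) + 1) = (D ^ 4) ^ k * D := by
          rw [eexp, pow_succ, pow_mul]
        rw [hD, mul_assoc ((D ^ 4) ^ k) D, ← mul_assoc (σ 0),
          ((comm_σD4 0).pow_right k).eq, mul_assoc, A1, ← pow_mul, ← pow_add]
        congr 1
        omega
      · subst hk
        have hmod : ¬ ((2 * k + 1) % 2 = 0) := by omega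
        rw [e, if_neg hmod]
        rw [List.map_cons, List.prod_cons, List.map_append, List.prod_append, ihn]
        have eexp : 2 * (2 * k + 1) + 1 = 4 * k + 3 := by omega
        have hD : D ^ (2 * (2 * k + 1) + 1) = (D ^ 4) ^ k * D ^ 3 := by
          rw [eexp, pow_add, pow_mul]
        rw [hD, mul_assoc ((D ^ 4) ^ k) (D ^ 3), ← mul_assoc (σ 0),
          ((comm_σD4 0).pow_right k).eq, mul_assoc, A3, ← pow_mul, ← pow_add]
        congr 1
        omega

end BraidAux

/-- For every `n`, there is a positive 4-braid word representing `(σ1σ2σ3)^{2n+1}`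
with exactly `5n+2` odd letters (`σ1, σ3`) and exactly `n+1` letters `σ2`. -/
theorem stmt5 (n : ℕ) :
    ∃ w : List (Fin 3),
      (w.map σ).prod = (σ 0 * σ 1 * σ 2) ^ (2 * n + 1) ∧
      w.count 0 + w.count 2 = 5 * n + 2 ∧
      w.count 1 = n + 1 := by
  refine ⟨BraidAux.wseq n, BraidAux.prod_wseq n, ?_⟩
  induction n using Nat.strong_induction_on with
  | _ n ih =>
    match n with
    | 0 => constructor <;> rfl
    | 1 => constructor <;> rfl
    | (n+2) =>
      obtain ⟨h1, h2⟩ := ih n (by omega)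
      have e : BraidAux.wseq (n+2)
          = 0 :: (BraidAux.wseq n ++ (if n % 2 = 0 then BraidAux.N1 else BraidAux.N3)) := rfl
      rw [e]
      by_cases h : n % 2 = 0
      · rw [if_pos h]
        constructor <;> simp [List.count_cons, List.count_append, BraidAux.N1] <;> omega
      · rw [if_neg h]
        constructor <;> simp [List.count_cons, List.count_append, BraidAux.N3] <;> omega
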